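/- For all ξ, η ∈ SⁿV, ζ_Vⁿ(ξ₊η₋) = n!·⟨ξ|η⟩, where ζ_V ∈ S²V_ℂ' is the canonical quadratic given by ζ_V(xy) = ⟨y|x̄⟩ for x, y ∈ V_ℂ. -/

import Mathlib

open scoped ComplexConjugate

noncomputable section

section Defs

variable {V W A : Type} [AddCommGroup V] [Module ℂ V] [CommRing A] [Algebra ℂ A]

/-- `A` (with embedding `ι`) is the symmetric algebra of `V`: universal property. -/
def IsSymmAlg (ι : V →ₗ[ℂ] A) : Prop :=
  ∀ (B : Type) [CommRing B] [Algebra ℂ B] (f : V →ₗ[ℂ] B),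
    ∃! F : A →ₐ[ℂ] B, ∀ v, F (ι v) = f v

/-- The span of `n`-fold products of generators: the degree-`n` part. -/
def GradeOf (gen : W → A) (n : ℕ) : Submodule ℂ A :=
  Submodule.span ℂ {a | ∃ f : Fin n → W, a = ∏ i, gen (f i)}

/-- The algebra is spanned by products of generators. -/
def SpanProdsOf (gen : W → A) : Prop :=
  ∀ x : A, x ∈ Submodule.span ℂ {a | ∃ (n : ℕ) (f : Fin n → W), a = ∏ i, gen (f i)}

/-- A quadratic: an antilinear functional concentrated in degree 2. -/
def IsQuadOf (gen : W → A) (ζ : A →ₗ⋆[ℂ] ℂ) : Prop :=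
  ∀ n : ℕ, n ≠ 2 → ∀ φ ∈ GradeOf gen n, ζ φ = 0

/-- The commutative product on the full antidual induced by the coproduct,
characterized on products of generators. -/
def IsConvProdOf (gen : W → A)
    (mul : (A →ₗ⋆[ℂ] ℂ) → (A →ₗ⋆[ℂ] ℂ) → (A →ₗ⋆[ℂ] ℂ)) : Prop :=
  ∀ (Φ Ψ : A →ₗ⋆[ℂ] ℂ) (n : ℕ) (v : Fin n → W),
    mul Φ Ψ (∏ i, gen (v i)) =
      ∑ S : Finset (Fin n), Φ (∏ i ∈ S, gen (v i)) * Ψ (∏ i ∈ Sᶜ, gen (v i))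

/-- The counit (unit of the antidual algebra): kills products of at least one generator. -/
def IsCounitOf (gen : W → A) (ε : A →ₗ⋆[ℂ] ℂ) : Prop :=
  ∀ (n : ℕ) (v : Fin n → W), ε (∏ i, gen (v i)) = if n = 0 then 1 else 0

/-- Powers of a functional with respect to the convolution product. -/
def powD (mul : (A →ₗ⋆[ℂ] ℂ) → (A →ₗ⋆[ℂ] ℂ) → (A →ₗ⋆[ℂ] ℂ))
    (ε ζ : A →ₗ⋆[ℂ] ℂ) : ℕ → (A →ₗ⋆[ℂ] ℂ)
  | 0 => ε
  | n + 1 => mul ζ (powD mul ε ζ n)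

/-- `E` is the Gaussian `exp ζ = Σ ζⁿ/n!` (a finite sum in each degree). -/
def IsGaussianOf (gen : W → A)
    (mul : (A →ₗ⋆[ℂ] ℂ) → (A →ₗ⋆[ℂ] ℂ) → (A →ₗ⋆[ℂ] ℂ))
    (ε ζ E : A →ₗ⋆[ℂ] ℂ) : Prop :=
  ∀ k : ℕ, ∀ ψ ∈ GradeOf gen k,
    E ψ = ∑ n ∈ Finset.range (k + 1), ((n.factorial : ℂ))⁻¹ * powD mul ε ζ n ψ

end Defs

section Defs2

variable {V A : Type} [NormedAddCommGroup V] [InnerProductSpace ℂ V]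
  [CommRing A] [Algebra ℂ A]

/-- The family of annihilation operators: derivations killing `1` with
`a v (ι w) = ⟨v|w⟩ 1`. -/
def IsAnn (ι : V →ₗ[ℂ] A) (a : V → A →ₗ[ℂ] A) : Prop :=
  ∀ v : V, (∀ x y : A, a v (x * y) = a v x * y + x * a v y) ∧
    a v 1 = 0 ∧ ∀ w : V, a v (ι w) = (inner ℂ v w : ℂ) • (1 : A)

/-- The canonical inner product on the symmetric algebra: graded pieces are
orthogonal and the permanent formula holds. (Antilinear in the first slot.) -/
def IsCanonInner (ι : V →ₗ[ℂ] A) (Bf : A →ₗ⋆[ℂ] A →ₗ[ℂ] ℂ) : Prop :=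
  (∀ (k n : ℕ), k ≠ n → ∀ (x : Fin k → V) (y : Fin n → V),
      Bf (∏ i, ι (x i)) (∏ i, ι (y i)) = 0) ∧
  ∀ (n : ℕ) (x y : Fin n → V),
      Bf (∏ i, ι (x i)) (∏ i, ι (y i)) =
        ∑ p : Equiv.Perm (Fin n), ∏ i, (inner ℂ (x i) (y (p i)) : ℂ)

/-- Iterated annihilation `a(vₙ)⋯a(v₁)φ` (applying `a(v₁)` first). -/
def iterAnn (a : V → A →ₗ[ℂ] A) : (n : ℕ) → (Fin n → V) → A → A
  | 0, _, φ => φ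
  | n + 1, v, φ => a (v (Fin.last n)) (iterAnn a n (fun i => v i.castSucc) φ)

/-- A symmetric bi-antilinear map `V × V → ℂ`. -/
def IsSymAnti (Z : V → V → ℂ) : Prop :=
  (∀ x y, Z x y = Z y x) ∧
  (∀ x y y', Z x (y + y') = Z x y + Z x y') ∧
  (∀ (c : ℂ) (x y : V), Z x (c • y) = conj c * Z x y)

end Defs2

section DefsC

variable {A AC : Type} [CommRing A] [Algebra ℂ A] [CommRing AC] [Algebra ℂ AC]

/-- An antilinear (conjugate-linear) algebra morphism, such as `φ ↦ φ₋`. -/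
def IsAntiAlgHom (m : A → AC) : Prop :=
  (∀ x y : A, m (x + y) = m x + m y) ∧ (∀ (c : ℂ) (x : A), m (c • x) = conj c • m x) ∧
  (∀ x y : A, m (x * y) = m x * m y) ∧ m 1 = 1

end DefsC


section Aux

open Finset

/-- The permutation sending `i ↦ j` and `i.succAbove k ↦ j.succAbove (τ k)`. -/
noncomputable def permOf {n : ℕ} (i j : Fin (n+1)) (τ : Equiv.Perm (Fin n)) :
    Equiv.Perm (Fin (n+1)) :=
  ((finSuccEquiv' i).trans (Equiv.optionCongr τ)).trans (finSuccEquiv' j).symm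

lemma permOf_apply_self {n : ℕ} (i j : Fin (n+1)) (τ : Equiv.Perm (Fin n)) :
    permOf i j τ i = j := by
  simp [permOf, finSuccEquiv'_at, finSuccEquiv'_symm_none]

lemma permOf_apply_succAbove {n : ℕ} (i j : Fin (n+1)) (τ : Equiv.Perm (Fin n)) (k : Fin n) :
    permOf i j τ (i.succAbove k) = j.succAbove (τ k) := by
  simp [permOf, finSuccEquiv'_succAbove, finSuccEquiv'_symm_some]

lemma permOf_bij {n : ℕ} (i : Fin (n+1)) :
    Function.Bijective (fun p : Fin (n+1) × Equiv.Perm (Fin n) => permOf i p.1 p.2) := by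
  constructor
  · rintro ⟨j, τ⟩ ⟨j', τ'⟩ h
    simp only at h
    have hj : j = j' := by
      have := congrArg (fun σ : Equiv.Perm (Fin (n+1)) => σ i) h
      simpa [permOf_apply_self] using this
    subst hj
    refine Prod.ext rfl ?_
    ext k
    have := congrArg (fun σ : Equiv.Perm (Fin (n+1)) => σ (i.succAbove k)) h
    simp only [permOf_apply_succAbove] at this
    exact congrArg Fin.val (Fin.succAbove_right_injective
      (show j.succAbove (τ k) = j.succAbove (τ' k) from this))
  · intro σ
    set j := σ i with hj
    set e : Option (Fin n) ≃ Option (Fin n) :=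
      ((finSuccEquiv' i).symm.trans σ).trans (finSuccEquiv' j) with he
    have hnone : e none = none := by
      simp [he, finSuccEquiv'_symm_none, ← hj, finSuccEquiv'_at]
    set τ := Equiv.removeNone e with hτ
    refine ⟨⟨j, τ⟩, ?_⟩
    simp only
    ext t
    rcases eq_or_ne t i with rfl | ht
    · rw [permOf_apply_self, hj]
    · obtain ⟨k, rfl⟩ := Fin.exists_succAbove_eq ht
      rw [permOf_apply_succAbove]
      have hsome : ∃ x', e (some k) = some x' := by
        rcases h : e (some k) with _ | x'
        · exfalso
          have : (some k : Option (Fin n)) = none := e.injective (h.trans hnone.symm)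
          simp at this
        · exact ⟨x', rfl⟩
      have := Equiv.removeNone_some e hsome
      rw [← hτ] at this
      have he2 : e (some k) = finSuccEquiv' j (σ (i.succAbove k)) := by
        simp [he, finSuccEquiv'_symm_some]
      rw [he2] at this
      have := congrArg (finSuccEquiv' j).symm this
      refine congrArg Fin.val ?_
      simpa [finSuccEquiv'_symm_some] using this

/-- Expansion of the permanent-type sum along row `i`. -/
lemma perm_sum_expand {n : ℕ} (M : Fin (n+1) → Fin (n+1) → ℂ) (i : Fin (n+1)) :
    ∑ σ : Equiv.Perm (Fin (n+1)), ∏ t, M t (σ t)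
      = ∑ j, M i j * ∑ τ : Equiv.Perm (Fin n), ∏ k, M (i.succAbove k) (j.succAbove (τ k)) := by
  rw [← Fintype.sum_bijective _ (permOf_bij i) _ (fun σ => ∏ t, M t (σ t)) (fun _ => rfl)]
  rw [Fintype.sum_prod_type]
  simp only
  refine Finset.sum_congr rfl fun j _ => ?_
  rw [Finset.mul_sum]
  refine Finset.sum_congr rfl fun τ _ => ?_
  rw [Fin.prod_univ_succAbove (fun t => M t (permOf i j τ t)) i]
  rw [permOf_apply_self]
  congr 1
  exact Finset.prod_congr rfl fun k _ => by rw [permOf_apply_succAbove]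

lemma prod_mem_gradeOf {W A : Type} [CommRing A] [Algebra ℂ A] (gen : W → A)
    {N : ℕ} (v : Fin N → W) (S : Finset (Fin N)) :
    ∏ i ∈ S, gen (v i) ∈ GradeOf gen S.card := by
  apply Submodule.subset_span
  refine ⟨fun k => v (S.orderIsoOfFin rfl k), ?_⟩
  rw [← Finset.prod_coe_sort S (fun i => gen (v i)),
    ← Equiv.prod_comp (S.orderIsoOfFin rfl).toEquiv (fun x : S => gen (v (x : Fin N)))]
  rfl

lemma IsAntiAlgHom.map_prod' {A AC : Type} [CommRing A] [Algebra ℂ A] [CommRing AC]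
    [Algebra ℂ AC] {m : A → AC} (hm : IsAntiAlgHom m) {ι' : Type} [DecidableEq ι']
    (s : Finset ι') (f : ι' → A) : m (∏ i ∈ s, f i) = ∏ i ∈ s, m (f i) := by
  induction s using Finset.cons_induction with
  | empty => simpa using hm.2.2.2
  | cons a s ha ih => rw [Finset.prod_cons, Finset.prod_cons, hm.2.2.1, ih]

lemma IsAntiAlgHom.map_zero' {A AC : Type} [CommRing A] [Algebra ℂ A] [CommRing AC]
    [Algebra ℂ AC] {m : A → AC} (hm : IsAntiAlgHom m) : m 0 = 0 := by
  have := hm.1 0 0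
  simpa using this.symm

end Aux

/-- For `ξ, η ∈ SⁿV`: `ζ_Vⁿ(ξ₊η₋) = n!·⟨ξ|η⟩`, where `ζ_V` is the canonical
quadratic of `SV_ℂ'` (given on generators by `ζ_V(x₊y₋) = ⟨x|y⟩`,
`ζ_V(x₊y₊) = ζ_V(x₋y₋) = 0`) and `⟨·|·⟩` is the canonical inner product. -/
theorem canonical_quadratic_power {V A AC : Type}
    [NormedAddCommGroup V] [InnerProductSpace ℂ V] [CompleteSpace V]
    [CommRing A] [Algebra ℂ A] [CommRing AC] [Algebra ℂ AC]
    (ι : V →ₗ[ℂ] A) (hA : IsSymmAlg ι)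
    (Bf : A →ₗ⋆[ℂ] A →ₗ[ℂ] ℂ) (hB : IsCanonInner ι Bf)
    (p : A →ₐ[ℂ] AC) (m : A → AC) (hm : IsAntiAlgHom m)
    -- the generators of `SV_ℂ`: the images of `V₊` and of `V₋`
    (gen : V ⊕ V → AC)
    (hgen : ∀ w : V ⊕ V, gen w = Sum.elim (fun v => p (ι v)) (fun v => m (ι v)) w)
    (hspanC : SpanProdsOf gen)
    (mulC : (AC →ₗ⋆[ℂ] ℂ) → (AC →ₗ⋆[ℂ] ℂ) → (AC →ₗ⋆[ℂ] ℂ))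
    (hmulC : IsConvProdOf gen mulC)
    (εC : AC →ₗ⋆[ℂ] ℂ) (hεC : IsCounitOf gen εC)
    -- the canonical quadratic ζ_V
    (ζV : AC →ₗ⋆[ℂ] ℂ) (hζq : IsQuadOf gen ζV)
    (hζpm : ∀ x y : V, ζV (p (ι x) * m (ι y)) = (inner ℂ x y : ℂ))
    (hζpp : ∀ x y : V, ζV (p (ι x) * p (ι y)) = 0)
    (hζmm : ∀ x y : V, ζV (m (ι x) * m (ι y)) = 0) :
    ∀ (n : ℕ) (ξ η : A), ξ ∈ GradeOf (fun w => ι w) n → η ∈ GradeOf (fun w => ι w) n →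
      powD mulC εC ζV n (p ξ * m η) = (n.factorial : ℂ) * Bf ξ η := by
  classical
  -- Step 1: the key computation on products of generators, by induction on `n`.
  have key : ∀ (n : ℕ) (x y : Fin n → V),
      powD mulC εC ζV n (p (∏ i, ι (x i)) * m (∏ i, ι (y i)))
        = (n.factorial : ℂ) * Bf (∏ i, ι (x i)) (∏ i, ι (y i)) := by
    intro n
    induction n with
    | zero =>
      intro x y
      have hε := hεC 0 Fin.elim0
      simp only [Finset.univ_eq_empty, Finset.prod_empty, if_pos rfl] at hε
      have hBf := hB.2 0 x y
      show εC (p (∏ i, ι (x i)) * m (∏ i, ι (y i))) = _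
      simp only [Finset.univ_eq_empty, Finset.prod_empty] at hBf ⊢
      rw [map_one, hm.2.2.2, mul_one, hε, hBf]
      simp
    | succ n IH =>
      intro x y
      set E := (finSumFinEquiv : Fin (n+1) ⊕ Fin (n+1) ≃ Fin ((n+1)+(n+1))) with hE
      set v : Fin ((n+1)+(n+1)) → V ⊕ V := fun t => Sum.map x y (E.symm t) with hv
      have hgenl : ∀ i' : Fin (n+1), gen (v (E (Sum.inl i'))) = p (ι (x i')) := by
        intro i'; rw [hgen]; simp [hv]
      have hgenr : ∀ j' : Fin (n+1), gen (v (E (Sum.inr j'))) = m (ι (y j')) := by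
        intro j'; rw [hgen]; simp [hv]
      have prod_eq : p (∏ i, ι (x i)) * m (∏ i, ι (y i)) = ∏ t, gen (v t) := by
        rw [← Equiv.prod_comp E (fun t => gen (v t)), Fintype.prod_sum_type]
        rw [map_prod, hm.map_prod']
        congr 1
        · exact Finset.prod_congr rfl fun i' _ => (hgenl i').symm
        · exact Finset.prod_congr rfl fun j' _ => (hgenr j').symm
      set M : Fin (n+1) → Fin (n+1) → ℂ := fun i' j' => (inner ℂ (x i') (y j') : ℂ) with hM
      set eS : Fin (n+1) × Fin (n+1) → Finset (Fin ((n+1)+(n+1))) :=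
        fun q => {E (Sum.inl q.1), E (Sum.inr q.2)} with heS
      have hab : ∀ (i : Fin (n+1)) (j : Fin (n+1)), E (Sum.inl i) ≠ E (Sum.inr j) := by
        intro i j h
        simpa using E.injective h
      -- the value of a single term of the convolution sum, for a mixed pair
      have hterm : ∀ q : Fin (n+1) × Fin (n+1),
          ζV (∏ t ∈ eS q, gen (v t)) * powD mulC εC ζV n (∏ t ∈ (eS q)ᶜ, gen (v t))
            = M q.1 q.2 * ((n.factorial : ℂ) *
                (Bf (∏ k, ι (x (q.1.succAbove k)))) (∏ k, ι (y (q.2.succAbove k)))) := by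
        rintro ⟨i, j⟩
        have h1 : ∏ t ∈ eS (i, j), gen (v t) = p (ι (x i)) * m (ι (y j)) := by
          show ∏ t ∈ ({E (Sum.inl i), E (Sum.inr j)} : Finset _), gen (v t) = _
          rw [Finset.prod_pair (hab i j), hgenl, hgenr]
        have hpair : eS (i, j) = Finset.image (⇑E) {Sum.inl i, Sum.inr j} := by
          show ({E (Sum.inl i), E (Sum.inr j)} : Finset _) = _
          rw [Finset.image_insert, Finset.image_singleton]
        have hcompl : (eS (i, j))ᶜ = Finset.image (⇑E)
            (({Sum.inl i, Sum.inr j} : Finset (Fin (n+1) ⊕ Fin (n+1)))ᶜ) := by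
          rw [hpair]
          ext t
          simp only [Finset.mem_compl, Finset.mem_image]
          constructor
          · intro h
            refine ⟨E.symm t, fun hc => h ⟨E.symm t, hc, E.apply_symm_apply t⟩,
              E.apply_symm_apply t⟩
          · rintro ⟨a, ha, rfl⟩ ⟨b, hb, hba⟩
            exact ha (E.injective hba ▸ hb)
        have h2 : ∏ t ∈ (eS (i, j))ᶜ, gen (v t)
            = p (∏ k, ι (x (i.succAbove k))) * m (∏ k, ι (y (j.succAbove k))) := by
          rw [hcompl, Finset.prod_image (fun a _ b _ h => E.injective h)]
          have hsplit : (({Sum.inl i, Sum.inr j} : Finset (Fin (n+1) ⊕ Fin (n+1)))ᶜ)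
              = (Finset.image Sum.inl ({i}ᶜ)) ∪ (Finset.image Sum.inr ({j}ᶜ)) := by
            ext s
            cases s <;>
              simp [Sum.inl.injEq, Sum.inr.injEq, eq_comm]
          rw [hsplit, Finset.prod_union (by
            simp [Finset.disjoint_left])]
          rw [Finset.prod_image (fun a _ b _ h => Sum.inl_injective h),
            Finset.prod_image (fun a _ b _ h => Sum.inr_injective h)]
          rw [← Fin.image_succAbove_univ i, ← Fin.image_succAbove_univ j,
            Finset.prod_image (fun a _ b _ h => Fin.succAbove_right_injective h),
            Finset.prod_image (fun a _ b _ h => Fin.succAbove_right_injective h)]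
          rw [map_prod, hm.map_prod']
          congr 1
          · exact Finset.prod_congr rfl fun k _ => hgenl (i.succAbove k)
          · exact Finset.prod_congr rfl fun k _ => hgenr (j.succAbove k)
        rw [h1, h2, hζpm, IH (fun k => x (i.succAbove k)) (fun k => y (j.succAbove k))]
      -- all other terms of the convolution sum vanish
      have hzero : ∀ S : Finset (Fin ((n+1)+(n+1))), S ∉ Set.range eS →
          ζV (∏ t ∈ S, gen (v t)) * powD mulC εC ζV n (∏ t ∈ Sᶜ, gen (v t)) = 0 := by
        intro S hS
        by_cases hc : S.card = 2
        · obtain ⟨a, b, hab', rfl⟩ := Finset.card_eq_two.mp hc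
          rw [Finset.prod_pair hab']
          rcases ha : E.symm a with i1 | j1 <;> rcases hb : E.symm b with i2 | j2 <;>
            obtain rfl : a = _ := (Equiv.symm_apply_eq E).mp ha <;>
            obtain rfl : b = _ := (Equiv.symm_apply_eq E).mp hb
          · rw [hgenl, hgenl, hζpp, zero_mul]
          · exact absurd ⟨(i1, j2), rfl⟩ hS
          · exact absurd ⟨(i2, j1), by
              show ({E (Sum.inl i2), E (Sum.inr j1)} : Finset _) = _
              rw [Finset.pair_comm]⟩ hS
          · rw [hgenr, hgenr, hζmm, zero_mul]
        · rw [hζq S.card hc _ (prod_mem_gradeOf gen v S), zero_mul]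
      show mulC ζV (powD mulC εC ζV n) _ = _
      rw [prod_eq, hmulC ζV (powD mulC εC ζV n) ((n+1)+(n+1)) v]
      have hsum : ∑ S : Finset (Fin ((n+1)+(n+1))),
          ζV (∏ t ∈ S, gen (v t)) * powD mulC εC ζV n (∏ t ∈ Sᶜ, gen (v t))
          = ∑ q : Fin (n+1) × Fin (n+1), M q.1 q.2 * ((n.factorial : ℂ) *
              (Bf (∏ k, ι (x (q.1.succAbove k)))) (∏ k, ι (y (q.2.succAbove k)))) := by
        symm
        refine Finset.sum_of_injOn eS ?_ (fun q _ => Finset.mem_univ _) ?_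
          (fun q _ => (hterm q).symm)
        · rintro ⟨i1, j1⟩ - ⟨i2, j2⟩ - h
          have h1 : E (Sum.inl i1) ∈ eS (i2, j2) := by
            rw [← h]; exact Finset.mem_insert_self _ _
          have h2 : E (Sum.inr j1) ∈ eS (i2, j2) := by
            rw [← h]
            exact Finset.mem_insert_of_mem (Finset.mem_singleton_self _)
          rcases Finset.mem_insert.mp h1 with h1' | h1'
          · rcases Finset.mem_insert.mp h2 with h2' | h2'
            · exact absurd h2'.symm (hab i2 j1)
            · have e1 : Sum.inl i1 = Sum.inl i2 := E.injective h1'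
              have e2 : (Sum.inr j1 : Fin (n+1) ⊕ Fin (n+1)) = Sum.inr j2 :=
                E.injective (Finset.mem_singleton.mp h2')
              simp only [Sum.inl.injEq] at e1
              simp only [Sum.inr.injEq] at e2
              rw [e1, e2]
          · exact absurd (Finset.mem_singleton.mp h1') (hab i1 j2)
        · intro S _ hS
          refine hzero S fun ⟨q, hq⟩ => hS ?_
          exact ⟨q, by simp, hq⟩
      rw [hsum]
      -- final combinatorial identity: row expansions of the permanent
      have hBmin : ∀ (i j : Fin (n+1)),
          (Bf (∏ k, ι (x (i.succAbove k)))) (∏ k, ι (y (j.succAbove k)))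
            = ∑ τ : Equiv.Perm (Fin n), ∏ k, M (i.succAbove k) (j.succAbove (τ k)) :=
        fun i j => hB.2 n _ _
      have hBfull : (Bf (∏ t, ι (x t))) (∏ t, ι (y t))
          = ∑ σ : Equiv.Perm (Fin (n+1)), ∏ t, M t (σ t) := hB.2 (n+1) x y
      rw [Fintype.sum_prod_type, hBfull]
      simp only [hBmin]
      have hrow : ∀ i : Fin (n+1),
          ∑ j, M i j * ((n.factorial : ℂ) *
            ∑ τ : Equiv.Perm (Fin n), ∏ k, M (i.succAbove k) (j.succAbove (τ k)))
          = (n.factorial : ℂ) * ∑ σ : Equiv.Perm (Fin (n+1)), ∏ t, M t (σ t) := by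
        intro i
        rw [perm_sum_expand M i, Finset.mul_sum]
        exact Finset.sum_congr rfl fun j _ => by ring
      simp only [hrow]
      rw [Finset.sum_const, Finset.card_univ, Fintype.card_fin, nsmul_eq_mul]
      push_cast [Nat.factorial_succ]
      ring
  -- Step 2: reduce to products of generators by (sesqui)linearity.
  intro n ξ η hξ hη
  have hm0 : m 0 = 0 := hm.map_zero'
  refine Submodule.span_induction₂
    (p := fun ξ η _ _ => powD mulC εC ζV n (p ξ * m η) = (n.factorial : ℂ) * Bf ξ η)
    ?_ ?_ ?_ ?_ ?_ ?_ ?_ hξ hη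
  · rintro ξ η ⟨f, rfl⟩ ⟨g, rfl⟩
    exact key n f g
  · intro η _
    rw [map_zero, zero_mul, map_zero, map_zero, LinearMap.zero_apply, mul_zero]
  · intro ξ _
    rw [hm0, mul_zero, map_zero, map_zero, mul_zero]
  · intro ξ ξ' η _ _ _ h1 h2
    rw [map_add, add_mul, map_add, h1, h2, map_add, LinearMap.add_apply, mul_add]
  · intro ξ η η' _ _ _ h1 h2
    rw [hm.1, mul_add, map_add, h1, h2, map_add, mul_add]
  · intro c ξ η _ _ h1
    rw [map_smul, smul_mul_assoc, map_smulₛₗ, map_smulₛₗ, LinearMap.smul_apply,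
      h1, smul_eq_mul, smul_eq_mul]
    ring
  · intro c ξ η _ _ h1
    rw [hm.2.1, mul_smul_comm, map_smulₛₗ, map_smul, h1, smul_eq_mul, smul_eq_mul,
      starRingEnd_apply, starRingEnd_apply, star_star]
    ring
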